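/- Normalizing integral of the univariate skew normal kernel: For every real number δ, ∫_ℝ φ(z) · Φ(δ·z) dz = 1/2, where φ(z) = exp(−z²/2)/√(2π) is the standard normal density and Φ(t) = (1 + erf(t/√2))/2 is the standard normal cumulative distribution function. -/

import Mathlib

open MeasureTheory

/-- The error function `erf t = (2/√π) ∫₀ᵗ exp(−s²) ds`. -/
noncomputable def erf (t : ℝ) : ℝ :=
  (2 / Real.sqrt Real.pi) * ∫ s in (0 : ℝ)..t, Real.exp (-s ^ 2)

/-- The standard normal probability density function. -/
noncomputable def stdNormalPdf (z : ℝ) : ℝ :=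
  Real.exp (-z ^ 2 / 2) / Real.sqrt (2 * Real.pi)

/-- The standard normal cumulative distribution function. -/
noncomputable def stdNormalCdf (t : ℝ) : ℝ :=
  (1 + erf (t / Real.sqrt 2)) / 2

lemma gauss_integrable : Integrable (fun s : ℝ => Real.exp (-s ^ 2)) := by
  simpa using integrable_exp_neg_mul_sq (by norm_num : (0:ℝ) < 1)

lemma erf_neg (t : ℝ) : erf (-t) = - erf t := by
  unfold erf
  have h := intervalIntegral.integral_comp_neg (a := (0:ℝ)) (b := t)
    (fun s => Real.exp (-s ^ 2))
  simp only [neg_neg, neg_zero] at h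
  rw [intervalIntegral.integral_symm, ← h]
  simp only [neg_sq]
  ring

lemma erf_abs_le (t : ℝ) : |erf t| ≤ 2 := by
  have key : ∀ u : ℝ, 0 ≤ u → |erf u| ≤ 2 := by
    intro u hu
    have h1 : (∫ s in (0:ℝ)..u, Real.exp (-s ^ 2)) =
        ∫ s in Set.Ioc 0 u, Real.exp (-s ^ 2) := by
      rw [intervalIntegral.integral_of_le hu]
    have hnn : 0 ≤ ∫ s in (0:ℝ)..u, Real.exp (-s ^ 2) := by
      rw [h1]; positivity
    have hle : (∫ s in (0:ℝ)..u, Real.exp (-s ^ 2)) ≤ Real.sqrt Real.pi := by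
      rw [h1]
      calc (∫ s in Set.Ioc 0 u, Real.exp (-s ^ 2))
          ≤ ∫ s : ℝ, Real.exp (-s ^ 2) :=
            setIntegral_le_integral gauss_integrable
              (Filter.Eventually.of_forall fun s => (Real.exp_pos _).le)
        _ = Real.sqrt Real.pi := by
            simpa using integral_gaussian (1:ℝ)
    have hπ : 0 < Real.sqrt Real.pi := Real.sqrt_pos.2 Real.pi_pos
    rw [abs_of_nonneg (by unfold erf; positivity)]
    unfold erf
    calc (2 / Real.sqrt Real.pi) * ∫ s in (0:ℝ)..u, Real.exp (-s ^ 2)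
        ≤ (2 / Real.sqrt Real.pi) * Real.sqrt Real.pi := by
          apply mul_le_mul_of_nonneg_left hle (by positivity)
      _ = 2 := by field_simp
  rcases le_or_gt 0 t with h | h
  · exact key t h
  · have := key (-t) (by linarith)
    rw [erf_neg, abs_neg] at this
    exact this

lemma continuous_erf : Continuous erf := by
  unfold erf
  exact continuous_const.mul
    (intervalIntegral.continuous_primitive
      (fun a b => (Real.continuous_exp.comp (by continuity)).intervalIntegrable a b) 0)

lemma pdf_integrable : Integrable stdNormalPdf := by
  unfold stdNormalPdf
  have : Integrable (fun z : ℝ => Real.exp (-(1/2) * z ^ 2)) :=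
    integrable_exp_neg_mul_sq (by norm_num)
  apply (this.div_const (Real.sqrt (2 * Real.pi))).congr
  filter_upwards with z
  ring_nf

lemma pdf_integral : ∫ z : ℝ, stdNormalPdf z = 1 := by
  unfold stdNormalPdf
  rw [integral_div]
  have h : ∫ z : ℝ, Real.exp (-z ^ 2 / 2) = Real.sqrt (2 * Real.pi) := by
    have h2 := integral_gaussian (1/2 : ℝ)
    have : ∀ z : ℝ, -z ^ 2 / 2 = -(1/2) * z ^ 2 := fun z => by ring
    simp only [this]
    rw [h2, show Real.pi / (1/2) = 2 * Real.pi by ring]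
  rw [h, div_self (by positivity)]

theorem integral_stdNormalPdf_mul_stdNormalCdf (δ : ℝ) :
    ∫ z : ℝ, stdNormalPdf z * stdNormalCdf (δ * z) = 1 / 2 := by
  have hg : Integrable (fun z : ℝ => erf (δ * z / Real.sqrt 2) * stdNormalPdf z) := by
    apply pdf_integrable.bdd_mul (c := 2)
    · exact (continuous_erf.comp (by continuity)).aestronglyMeasurable
    · exact Filter.Eventually.of_forall (fun x => by simpa using erf_abs_le (δ * x / Real.sqrt 2))
  have hodd : ∫ z : ℝ, erf (δ * z / Real.sqrt 2) * stdNormalPdf z = 0 := by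
    have h1 : ∫ z : ℝ, erf (δ * -z / Real.sqrt 2) * stdNormalPdf (-z)
        = ∫ z : ℝ, erf (δ * z / Real.sqrt 2) * stdNormalPdf z :=
      integral_neg_eq_self (fun z : ℝ => erf (δ * z / Real.sqrt 2) * stdNormalPdf z) volume
    have h2 : ∀ z : ℝ, erf (δ * -z / Real.sqrt 2) * stdNormalPdf (-z)
        = -(erf (δ * z / Real.sqrt 2) * stdNormalPdf z) := by
      intro z
      have : δ * -z / Real.sqrt 2 = -(δ * z / Real.sqrt 2) := by ring
      rw [this, erf_neg]
      unfold stdNormalPdf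
      rw [neg_sq]
      ring
    simp only [h2, integral_neg] at h1
    linarith
  have heq : ∀ z : ℝ, stdNormalPdf z * stdNormalCdf (δ * z)
      = stdNormalPdf z / 2 + erf (δ * z / Real.sqrt 2) * stdNormalPdf z / 2 := by
    intro z
    unfold stdNormalCdf
    ring
  simp only [heq]
  rw [integral_add (pdf_integrable.div_const 2) (hg.div_const 2), integral_div,
    integral_div, pdf_integral, hodd]
  norm_num
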